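/- Let ρ be a measure on (0,∞) with ∫_0^∞ min(1, r) dρ(r) < ∞ and set γ = ∫_0^∞ (1 − e^{−r}) dρ(r); assume 0 < γ < ∞. Define π_j = (1/γ) ∫_0^∞ (r^j e^{−r}/j!) dρ(r) for j = 1, 2, …. Then (π_j)_{j≥1} is a probability mass function on the positive integers (each π_j ∈ [0,1] and ∑_{j≥1} π_j = 1), and for every t ∈ [0,1] one has exp{ γ·( ∑_{j≥1} π_j t^j − 1 ) } = exp{ −∫_0^∞ (1 − e^{−(1−t)r}) dρ(r) }. -/

import Mathlib

open MeasureTheory Real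

private lemma exp_sub_one_tsum (x : ℝ) :
    ∑' j : ℕ, x ^ (j + 1) / (Nat.factorial (j + 1) : ℝ) = Real.exp x - 1 := by
  have hs := Real.summable_pow_div_factorial x
  have hexp : Real.exp x = ∑' n : ℕ, x ^ n / (Nat.factorial n : ℝ) := by
    rw [Real.exp_eq_exp_ℝ, NormedSpace.exp_eq_tsum_div]
  have h0 := hs.tsum_eq_zero_add
  simp only [pow_zero, Nat.factorial_zero, Nat.cast_one, div_one] at h0
  rw [← hexp] at h0
  linarith

private lemma summable_shift (x : ℝ) :
    Summable (fun j : ℕ => x ^ (j + 1) / (Nat.factorial (j + 1) : ℝ)) :=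
  (Real.summable_pow_div_factorial x).comp_injective (add_left_injective 1)

private lemma key_tsum (t r : ℝ) (ht : 0 ≤ t) (hr : 0 ≤ r) :
    ∑' j : ℕ, ENNReal.ofReal (t ^ (j + 1) *
        (r ^ (j + 1) * Real.exp (-r) / (Nat.factorial (j + 1) : ℝ))) =
      ENNReal.ofReal (Real.exp (-((1 - t) * r)) - Real.exp (-r)) := by
  have hterm : ∀ j : ℕ, t ^ (j + 1) * (r ^ (j + 1) * Real.exp (-r) / (Nat.factorial (j + 1) : ℝ))
      = (t * r) ^ (j + 1) / (Nat.factorial (j + 1) : ℝ) * Real.exp (-r) := by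
    intro j; rw [mul_pow]; ring
  have hnn : ∀ j : ℕ, 0 ≤ (t * r) ^ (j + 1) / (Nat.factorial (j + 1) : ℝ) * Real.exp (-r) := by
    intro j
    exact mul_nonneg (div_nonneg (pow_nonneg (mul_nonneg ht hr) _) (by positivity))
      (Real.exp_nonneg _)
  have hsum : Summable fun j : ℕ =>
      (t * r) ^ (j + 1) / (Nat.factorial (j + 1) : ℝ) * Real.exp (-r) :=
    (summable_shift (t * r)).mul_right _
  have htsum : ∑' j : ℕ, (t * r) ^ (j + 1) / (Nat.factorial (j + 1) : ℝ) * Real.exp (-r)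
      = Real.exp (-((1 - t) * r)) - Real.exp (-r) := by
    rw [tsum_mul_right, exp_sub_one_tsum (t * r), sub_mul, ← Real.exp_add]
    ring_nf
  simp only [hterm]
  rw [← ENNReal.ofReal_tsum_of_nonneg hnn hsum, htsum]

private lemma meas_aux (t : ℝ) (j : ℕ) :
    Measurable fun r : ℝ => ENNReal.ofReal (t ^ (j + 1) *
      (r ^ (j + 1) * Real.exp (-r) / (Nat.factorial (j + 1) : ℝ))) := by
  apply Measurable.ennreal_ofReal
  exact measurable_const.mul (((measurable_id.pow_const (j + 1)).mul
    (Real.measurable_exp.comp measurable_neg)).div_const _)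

private lemma lintegral_tsum_eq (ρ : Measure ℝ) (t : ℝ) (ht : 0 ≤ t) :
    ∑' j : ℕ, ∫⁻ r in Set.Ioi (0 : ℝ), ENNReal.ofReal (t ^ (j + 1) *
        (r ^ (j + 1) * Real.exp (-r) / (Nat.factorial (j + 1) : ℝ))) ∂ρ =
      ∫⁻ r in Set.Ioi (0 : ℝ),
        ENNReal.ofReal (Real.exp (-((1 - t) * r)) - Real.exp (-r)) ∂ρ := by
  rw [← MeasureTheory.lintegral_tsum (fun j => (meas_aux t j).aemeasurable)]
  refine setLIntegral_congr_fun measurableSet_Ioi ?_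
  intro r hr
  exact key_tsum t r ht (le_of_lt hr)

theorem compoundPoisson_representation (ρ : Measure ℝ)
    (hρ : ∫⁻ r in Set.Ioi (0 : ℝ), ENNReal.ofReal (min 1 r) ∂ρ ≠ ⊤)
    (γ : ℝ) (hγpos : 0 < γ)
    (hγ : γ = (∫⁻ r in Set.Ioi (0 : ℝ), ENNReal.ofReal (1 - Real.exp (-r)) ∂ρ).toReal)
    (hγfin : ∫⁻ r in Set.Ioi (0 : ℝ), ENNReal.ofReal (1 - Real.exp (-r)) ∂ρ ≠ ⊤)
    (pj : ℕ → ℝ)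
    (hpj : ∀ j : ℕ, pj j =
      (∫⁻ r in Set.Ioi (0 : ℝ),
        ENNReal.ofReal (r ^ (j + 1) * Real.exp (-r) / (Nat.factorial (j + 1))) ∂ρ).toReal / γ) :
    (∀ j : ℕ, pj j ∈ Set.Icc (0 : ℝ) 1) ∧
    (∑' j : ℕ, pj j = 1) ∧
    (∀ t : ℝ, t ∈ Set.Icc (0 : ℝ) 1 →
      Real.exp (γ * ((∑' j : ℕ, pj j * t ^ (j + 1)) - 1)) =
        Real.exp (-(∫⁻ r in Set.Ioi (0 : ℝ),
          ENNReal.ofReal (1 - Real.exp (-((1 - t) * r))) ∂ρ).toReal)) := by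
  set Γ := ∫⁻ r in Set.Ioi (0 : ℝ), ENNReal.ofReal (1 - Real.exp (-r)) ∂ρ with hΓ
  set I : ℕ → ENNReal := fun j => ∫⁻ r in Set.Ioi (0 : ℝ),
    ENNReal.ofReal (r ^ (j + 1) * Real.exp (-r) / (Nat.factorial (j + 1) : ℝ)) ∂ρ with hI
  -- the t = 1 case of the tsum identity : ∑' I j = Γ
  have hIsum : ∑' j : ℕ, I j = Γ := by
    have h1 := lintegral_tsum_eq ρ 1 zero_le_one
    simp only [one_pow, one_mul, sub_self, zero_mul, neg_zero, Real.exp_zero] at h1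
    rw [hI, hΓ]
    exact h1
  have hIle : ∀ j, I j ≤ Γ := fun j => hIsum ▸ ENNReal.le_tsum j
  have hIfin : ∀ j, I j ≠ ⊤ := fun j => ne_top_of_le_ne_top hγfin (hIle j)
  have hItoReal_le : ∀ j, (I j).toReal ≤ γ := by
    intro j
    rw [hγ]
    exact ENNReal.toReal_mono hγfin (hIle j)
  have hpj' : ∀ j, pj j = (I j).toReal / γ := fun j => hpj j
  refine ⟨?_, ?_, ?_⟩
  · intro j
    rw [hpj' j]
    constructor
    · exact div_nonneg ENNReal.toReal_nonneg hγpos.le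
    · rw [div_le_one hγpos]; exact hItoReal_le j
  · have : ∑' j : ℕ, pj j = (∑' j : ℕ, (I j).toReal) / γ := by
      simp only [hpj']
      exact tsum_div_const
    rw [this, ← ENNReal.tsum_toReal_eq hIfin, hIsum, ← hγ, div_self hγpos.ne']
  · intro t ⟨ht0, ht1⟩
    set K := ∫⁻ r in Set.Ioi (0 : ℝ),
      ENNReal.ofReal (Real.exp (-((1 - t) * r)) - Real.exp (-r)) ∂ρ with hK
    set L := ∫⁻ r in Set.Ioi (0 : ℝ),
      ENNReal.ofReal (1 - Real.exp (-((1 - t) * r))) ∂ρ with hL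
    -- L + K = Γ
    have hLK : L + K = Γ := by
      rw [hL, hK, hΓ, ← lintegral_add_left]
      · refine setLIntegral_congr_fun measurableSet_Ioi ?_
        intro r hr
        beta_reduce
        rw [← ENNReal.ofReal_add]
        · ring_nf
        · simp only [sub_nonneg]
          exact Real.exp_le_one_iff.mpr (by nlinarith [Set.mem_Ioi.mp hr])
        · simp only [sub_nonneg]
          exact Real.exp_le_exp.mpr (by nlinarith [Set.mem_Ioi.mp hr])
      · exact Measurable.ennreal_ofReal
          (measurable_const.sub (Real.measurable_exp.comp
            (measurable_const.mul measurable_id).neg))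
    have hKle : K ≤ Γ := hLK ▸ le_add_self
    have hKfin : K ≠ ⊤ := ne_top_of_le_ne_top hγfin hKle
    have hLfin : L ≠ ⊤ := ne_top_of_le_ne_top hγfin (hLK ▸ le_self_add)
    have hsumKL : L.toReal + K.toReal = γ := by
      rw [← ENNReal.toReal_add hLfin hKfin, hLK, hγ]
    -- J j = ofReal (t^(j+1)) * I j
    set J : ℕ → ENNReal := fun j => ∫⁻ r in Set.Ioi (0 : ℝ),
      ENNReal.ofReal (t ^ (j + 1) *
        (r ^ (j + 1) * Real.exp (-r) / (Nat.factorial (j + 1) : ℝ))) ∂ρ with hJ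
    have hJeq : ∀ j, J j = ENNReal.ofReal (t ^ (j + 1)) * I j := by
      intro j
      rw [hJ, hI]
      simp only
      rw [← lintegral_const_mul' _ _ ENNReal.ofReal_ne_top]
      congr 1
      funext r
      rw [← ENNReal.ofReal_mul (pow_nonneg ht0 _)]
    have hJsum : ∑' j, J j = K := lintegral_tsum_eq ρ t ht0
    have hJfin : ∀ j, J j ≠ ⊤ := fun j => ne_top_of_le_ne_top hKfin (hJsum ▸ ENNReal.le_tsum j)
    have hJtoReal : ∀ j, (J j).toReal = t ^ (j + 1) * (I j).toReal := by
      intro j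
      rw [hJeq j, ENNReal.toReal_mul, ENNReal.toReal_ofReal (pow_nonneg ht0 _)]
    have hsum_pj : ∑' j : ℕ, pj j * t ^ (j + 1) = K.toReal / γ := by
      have heq : ∀ j : ℕ, pj j * t ^ (j + 1) = (J j).toReal / γ := by
        intro j
        rw [hpj' j, hJtoReal j]
        ring
      simp only [heq]
      rw [tsum_div_const, ← ENNReal.tsum_toReal_eq hJfin, hJsum]
    rw [hsum_pj]
    congr 1
    field_simp
    linarith
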